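/- For each t ∈ {0,1,…,T−1} and each k ∈ ℕ, the function a ↦ G_t(a,k) is convex on ℤ: for all a ∈ ℤ, G_t(a+1,k) + G_t(a−1,k) ≥ 2·G_t(a,k). -/

import Mathlib

open Filter Topology
set_option linter.unusedSectionVars false

/-- Negative Binomial pmf with real shape `r` and success probability `p`:
`NB(r,p)(z) = Γ(z+r)/(Γ(r)·z!)·p^r·(1−p)^z` for `r > 0`, and `NB(0,p)` is
the point mass at `0`. -/
noncomputable def NB (r p : ℝ) (z : ℕ) : ℝ :=
  if r = 0 then (if z = 0 then (1 : ℝ) else 0)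
  else Real.Gamma ((z : ℝ) + r) / (Real.Gamma r * (Nat.factorial z : ℝ)) * p ^ r * (1 - p) ^ z

/-- `p_t = (β0 + N·t)/(β0 + N·t + 1)`. -/
noncomputable def pt (β0 : ℝ) (N t : ℕ) : ℝ :=
  (β0 + (N : ℝ) * (t : ℝ)) / (β0 + (N : ℝ) * (t : ℝ) + 1)

/-- Expectation `E_{(Z,K)}[f(Z,K)]` with `Z ~ NB(α0+k, p_t)` and
`K ~ NB((N−1)(α0+k), p_t)` independent. -/
noncomputable def EZK (α0 β0 : ℝ) (N t k : ℕ) (f : ℕ → ℕ → ℝ) : ℝ :=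
  ∑' z : ℕ, ∑' κ : ℕ,
    NB (α0 + (k : ℝ)) (pt β0 N t) z * NB (((N : ℝ) - 1) * (α0 + (k : ℝ))) (pt β0 N t) κ * f z κ

/-- One-period cost plus cost-to-go of ordering up to level `a` at stage `(t,k)`. -/
noncomputable def G (α0 β0 : ℝ) (N : ℕ) (cv ch cb : ℝ) (W : ℕ → ℤ → ℕ → ℝ)
    (t : ℕ) (a : ℤ) (k : ℕ) : ℝ :=
  cv * (a : ℝ)
    + ch * ∑' z : ℕ, NB (α0 + (k : ℝ)) (pt β0 N t) z * max ((a : ℝ) - (z : ℝ)) 0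
    + cb * ∑' z : ℕ, NB (α0 + (k : ℝ)) (pt β0 N t) z * max ((z : ℝ) - (a : ℝ)) 0
    + EZK α0 β0 N t k (fun z κ => W (t + 1) (a - (z : ℤ)) (k + z + κ))


lemma NB_nonneg {r p : ℝ} (hr : 0 ≤ r) (hp : 0 < p) (hp1 : p ≤ 1) (z : ℕ) : 0 ≤ NB r p z := by
  unfold NB
  split
  · split <;> norm_num
  · rename_i h
    have hr' : 0 < r := lt_of_le_of_ne hr (Ne.symm h)
    have h1 : 0 < Real.Gamma ((z : ℝ) + r) := Real.Gamma_pos_of_pos (by positivity)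
    have h2 : 0 < Real.Gamma r := Real.Gamma_pos_of_pos hr'
    have h3 : (0:ℝ) < Nat.factorial z := by positivity
    have h4 : (0:ℝ) < p ^ r := Real.rpow_pos_of_pos hp r
    have h5 : (0:ℝ) ≤ (1 - p) ^ z := pow_nonneg (by linarith) z
    positivity

lemma NB_pos {r p : ℝ} (hr : 0 < r) (hp : 0 < p) (hp1 : p < 1) (z : ℕ) : 0 < NB r p z := by
  unfold NB
  rw [if_neg (ne_of_gt hr)]
  have h1 : 0 < Real.Gamma ((z : ℝ) + r) := Real.Gamma_pos_of_pos (by positivity)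
  have h2 : 0 < Real.Gamma r := Real.Gamma_pos_of_pos hr
  have h3 : (0:ℝ) < Nat.factorial z := by positivity
  have h4 : (0:ℝ) < p ^ r := Real.rpow_pos_of_pos hp r
  have h5 : (0:ℝ) < (1 - p) ^ z := pow_pos (by linarith) z
  positivity

lemma NB_succ {r p : ℝ} (hr : 0 < r) (z : ℕ) :
    NB r p (z + 1) * ((z : ℝ) + 1) = NB r p z * ((z : ℝ) + r) * (1 - p) := by
  unfold NB
  rw [if_neg (ne_of_gt hr), if_neg (ne_of_gt hr)]
  have hzr : ((z : ℝ) + r) ≠ 0 := by positivity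
  have hg : Real.Gamma (((z + 1 : ℕ) : ℝ) + r) = ((z : ℝ) + r) * Real.Gamma ((z : ℝ) + r) := by
    push_cast
    rw [show (z : ℝ) + 1 + r = ((z : ℝ) + r) + 1 by ring, Real.Gamma_add_one hzr]
  rw [hg]
  have hf : ((Nat.factorial (z + 1) : ℕ) : ℝ) = ((z : ℝ) + 1) * (Nat.factorial z : ℝ) := by
    rw [Nat.factorial_succ]; push_cast; ring
  rw [hf, pow_succ]
  have h2 : Real.Gamma r ≠ 0 := ne_of_gt (Real.Gamma_pos_of_pos hr)
  have h3 : ((Nat.factorial z : ℕ) : ℝ) ≠ 0 := by positivity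
  field_simp

lemma tendsto_aux (c : ℝ) : Tendsto (fun n : ℕ => c / ((n : ℝ) + 1)) atTop (𝓝 0) := by
  have := (tendsto_const_div_atTop_nhds_zero_nat c).comp (tendsto_add_atTop_nat 1)
  apply this.congr
  intro n
  simp [Function.comp]

lemma summable_NB_mul_add_one {r p : ℝ} (hr : 0 ≤ r) (hp : 0 < p) (hp1 : p < 1) :
    Summable (fun z : ℕ => NB r p z * ((z : ℝ) + 1)) := by
  rcases eq_or_lt_of_le hr with h0 | hrpos
  · apply summable_of_ne_finset_zero (s := {0})
    intro z hz
    simp only [Finset.mem_singleton] at hz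
    simp [NB, ← h0, hz]
  · set f : ℕ → ℝ := fun z => NB r p z * ((z : ℝ) + 1) with hf
    have hfpos : ∀ z, 0 < f z := fun z => by
      have := NB_pos hrpos hp hp1 z; positivity
    apply summable_of_ratio_test_tendsto_lt_one (l := 1 - p) (by linarith)
    · filter_upwards with n; exact ne_of_gt (hfpos n)
    · have heq : ∀ n : ℕ, ‖f (n + 1)‖ / ‖f n‖ =
          (1 - p) * (((n : ℝ) + r) / ((n : ℝ) + 1)) * (((n : ℝ) + 2) / ((n : ℝ) + 1)) := by
        intro n
        rw [Real.norm_of_nonneg (hfpos (n+1)).le, Real.norm_of_nonneg (hfpos n).le]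
        have key := NB_succ (p := p) hrpos n
        have h1 : ((n : ℝ) + 1) ≠ 0 := by positivity
        have hNB : NB r p (n + 1) = NB r p n * ((n : ℝ) + r) * (1 - p) / ((n : ℝ) + 1) := by
          field_simp at key ⊢; linarith [key]
        have hn0 : NB r p n ≠ 0 := ne_of_gt (NB_pos hrpos hp hp1 n)
        simp only [hf]
        rw [hNB]
        push_cast
        field_simp
        ring
      rw [show (1 - p) = (1 - p) * 1 * 1 by ring]
      apply Tendsto.congr (fun n => (heq n).symm)
      apply Tendsto.mul
      apply Tendsto.mul tendsto_const_nhds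
      · have : ∀ n : ℕ, ((n : ℝ) + r) / ((n : ℝ) + 1) = 1 + (r - 1) / ((n : ℝ) + 1) := by
          intro n; have h1 : ((n : ℝ) + 1) ≠ 0 := by positivity
          field_simp; ring
        have h := tendsto_const_nhds.add (tendsto_aux (r - 1)) (α := ℕ) (f := fun _ => (1:ℝ))
        rw [add_zero] at h
        exact Tendsto.congr (fun n => (this n).symm) h
      · have : ∀ n : ℕ, ((n : ℝ) + 2) / ((n : ℝ) + 1) = 1 + 1 / ((n : ℝ) + 1) := by
          intro n; have h1 : ((n : ℝ) + 1) ≠ 0 := by positivity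
          field_simp; ring
        have h := tendsto_const_nhds.add (tendsto_aux 1) (α := ℕ) (f := fun _ => (1:ℝ))
        rw [add_zero] at h
        exact Tendsto.congr (fun n => (this n).symm) h

lemma summable_NB {r p : ℝ} (hr : 0 ≤ r) (hp : 0 < p) (hp1 : p < 1) :
    Summable (fun z : ℕ => NB r p z) := by
  apply Summable.of_nonneg_of_le (fun z => NB_nonneg hr hp hp1.le z)
    (fun z => ?_) (summable_NB_mul_add_one hr hp hp1)
  nlinarith [NB_nonneg hr hp hp1.le z, Nat.cast_nonneg (α := ℝ) z]

lemma summable_NB_mul {r p : ℝ} (hr : 0 ≤ r) (hp : 0 < p) (hp1 : p < 1) :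
    Summable (fun z : ℕ => NB r p z * (z : ℝ)) := by
  apply Summable.of_nonneg_of_le
    (fun z => mul_nonneg (NB_nonneg hr hp hp1.le z) (Nat.cast_nonneg z))
    (fun z => ?_) (summable_NB_mul_add_one hr hp hp1)
  nlinarith [NB_nonneg hr hp hp1.le z]

lemma summable_NB_linear {r p : ℝ} (hr : 0 ≤ r) (hp : 0 < p) (hp1 : p < 1) (c1 c2 : ℝ) :
    Summable (fun z : ℕ => NB r p z * (c1 + c2 * (z : ℝ))) := by
  have := ((summable_NB hr hp hp1).mul_right c1).add ((summable_NB_mul hr hp hp1).mul_right c2)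
  exact this.congr (fun z => by ring)

lemma NB_moment {r p : ℝ} (hr : 0 ≤ r) (hp : 0 < p) (hp1 : p < 1) :
    (∑' z : ℕ, NB r p z * (z : ℝ)) * p = r * (1 - p) * ∑' z : ℕ, NB r p z := by
  rcases eq_or_lt_of_le hr with h0 | hrpos
  · have : ∀ z : ℕ, NB r p z * (z : ℝ) = 0 := by
      intro z
      rcases Nat.eq_zero_or_pos z with hz | hz
      · simp [hz]
      · simp [NB, ← h0, Nat.pos_iff_ne_zero.mp hz]
    rw [tsum_congr this, tsum_zero, ← h0]; ring
  · set S := ∑' z : ℕ, NB r p z with hS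
    set M := ∑' z : ℕ, NB r p z * (z : ℝ) with hM
    have hsum := summable_NB_mul (p := p) hr hp hp1
    have hshift : M = ∑' z : ℕ, NB r p (z + 1) * ((z : ℝ) + 1) := by
      rw [hM, Summable.tsum_eq_zero_add hsum]
      push_cast
      simp
    have hkey : ∀ z : ℕ, NB r p (z + 1) * ((z : ℝ) + 1) =
        NB r p z * (z : ℝ) * (1 - p) + NB r p z * (r * (1 - p)) := by
      intro z
      rw [NB_succ hrpos z]; ring
    have hsplit : (∑' z : ℕ, NB r p (z + 1) * ((z : ℝ) + 1)) =
        M * (1 - p) + S * (r * (1 - p)) := by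
      rw [tsum_congr hkey, Summable.tsum_add (hsum.mul_right _) ((summable_NB hr hp hp1).mul_right _),
        tsum_mul_right, tsum_mul_right]
    have : M = M * (1 - p) + S * (r * (1 - p)) := hshift.trans hsplit
    nlinarith [this]

lemma NB_shift {r p : ℝ} (hr : 0 < r) (hp : 0 < p) (hp1 : p < 1) :
    (∑' z : ℕ, NB (r + 1) p z) = ∑' z : ℕ, NB r p z := by
  have hkey : ∀ z : ℕ, NB (r + 1) p z * r = NB r p z * ((z : ℝ) + r) * p := by
    intro z
    unfold NB
    rw [if_neg (by positivity), if_neg (ne_of_gt hr)]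
    have hg1 : Real.Gamma ((z : ℝ) + (r + 1)) = ((z : ℝ) + r) * Real.Gamma ((z : ℝ) + r) := by
      rw [show (z : ℝ) + (r + 1) = ((z : ℝ) + r) + 1 by ring,
        Real.Gamma_add_one (by positivity)]
    have hg2 : Real.Gamma (r + 1) = r * Real.Gamma r := Real.Gamma_add_one (ne_of_gt hr)
    have hp' : p ^ (r + 1) = p ^ r * p := Real.rpow_add_one (ne_of_gt hp) r
    rw [hg1, hg2, hp']
    have h2 : Real.Gamma r ≠ 0 := ne_of_gt (Real.Gamma_pos_of_pos hr)
    have h3 : ((Nat.factorial z : ℕ) : ℝ) ≠ 0 := by positivity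
    field_simp
  have h1 : (∑' z : ℕ, NB (r + 1) p z) * r = ∑' z : ℕ, NB r p z * ((z : ℝ) + r) * p := by
    rw [← tsum_mul_right, tsum_congr hkey]
  have h2 : (∑' z : ℕ, NB r p z * ((z : ℝ) + r) * p) =
      (∑' z : ℕ, NB r p z * (z : ℝ)) * p + (∑' z : ℕ, NB r p z) * (r * p) := by
    rw [show (fun z : ℕ => NB r p z * ((z : ℝ) + r) * p) =
        (fun z : ℕ => NB r p z * (z : ℝ) * p + NB r p z * (r * p)) from funext fun z => by ring,
      Summable.tsum_add ((summable_NB_mul hr.le hp hp1).mul_right _)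
        ((summable_NB hr.le hp hp1).mul_right _), tsum_mul_right, tsum_mul_right]
  have hm := NB_moment hr.le hp hp1
  have : (∑' z : ℕ, NB (r + 1) p z) * r = (∑' z : ℕ, NB r p z) * r := by
    rw [h1, h2]; nlinarith [hm]
  exact mul_right_cancel₀ (ne_of_gt hr) this

lemma NB_shift_nat {r p : ℝ} (hr : 0 < r) (hp : 0 < p) (hp1 : p < 1) (m : ℕ) :
    (∑' z : ℕ, NB (r + (m : ℝ)) p z) = ∑' z : ℕ, NB r p z := by
  induction m with
  | zero => simp
  | succ m ih =>
    have h : r + ((m + 1 : ℕ) : ℝ) = (r + (m : ℝ)) + 1 := by push_cast; ring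
    rw [h, NB_shift (by positivity) hp hp1, ih]

lemma tsum_NB_linear_eq {r p : ℝ} (hr : 0 ≤ r) (hp : 0 < p) (hp1 : p < 1) (c1 c2 : ℝ) :
    ∑' z : ℕ, NB r p z * (c1 + c2 * (z : ℝ)) =
      (∑' z : ℕ, NB r p z) * c1 + (∑' z : ℕ, NB r p z * (z : ℝ)) * c2 := by
  rw [show (fun z : ℕ => NB r p z * (c1 + c2 * (z : ℝ))) =
      (fun z : ℕ => NB r p z * c1 + (NB r p z * (z : ℝ)) * c2) from funext fun z => by ring,
    Summable.tsum_add ((summable_NB hr hp hp1).mul_right _) ((summable_NB_mul hr hp hp1).mul_right _),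
    tsum_mul_right, tsum_mul_right]

lemma tsum_le_of_nonneg_of_le {u v : ℕ → ℝ} (h0 : ∀ i, 0 ≤ u i) (h : ∀ i, u i ≤ v i)
    (hv : Summable v) : ∑' i, u i ≤ ∑' i, v i :=
  Summable.tsum_le_tsum h (Summable.of_nonneg_of_le h0 h hv) hv

lemma tsum_convex {u v w : ℕ → ℝ} (hu : Summable u) (hv : Summable v) (hw : Summable w)
    (h : ∀ i, 2 * u i ≤ v i + w i) : 2 * (∑' i, u i) ≤ (∑' i, v i) + (∑' i, w i) := by
  rw [← tsum_mul_left, ← Summable.tsum_add hv hw]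
  exact Summable.tsum_le_tsum h (hu.mul_left 2) (hv.add hw)

lemma max_conv (u : ℝ) : 2 * max u 0 ≤ max (u + 1) 0 + max (u - 1) 0 := by
  rcases le_total u 0 with h | h
  · rw [max_eq_right h]
    have h1 := le_max_right (u + 1) 0
    have h2 := le_max_right (u - 1) 0
    linarith
  · rw [max_eq_left h]
    have h1 := le_max_left (u + 1) 0
    have h2 := le_max_left (u - 1) 0
    linarith

noncomputable def Ifun (p r r' : ℝ) (V : ℤ → ℕ → ℝ) (k : ℕ) (b : ℤ) (z : ℕ) : ℝ :=
  ∑' κ : ℕ, NB r p z * NB r' p κ * V (b - (z : ℤ)) (k + z + κ)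

noncomputable def Jfun (p r r' : ℝ) (V : ℤ → ℕ → ℝ) (k : ℕ) (b : ℤ) : ℝ :=
  ∑' z : ℕ, Ifun p r r' V k b z

section J
variable {p r r' C : ℝ} {V : ℤ → ℕ → ℝ} {k : ℕ}
variable (hr : 0 ≤ r) (hr' : 0 ≤ r') (hp : 0 < p) (hp1 : p < 1)
variable (hV0 : ∀ x m, 0 ≤ V x m) (hC : 0 ≤ C)
variable (hVb : ∀ x m, V x m ≤ C * (1 + |(x : ℝ)| + (m : ℝ)))

include hr hr' hp hp1 hV0 hC hVb

lemma inner_summable (b : ℤ) (z : ℕ) :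
    Summable (fun κ : ℕ => NB r p z * NB r' p κ * V (b - (z : ℤ)) (k + z + κ)) := by
  set c1 : ℝ := C * (1 + |(b : ℝ) - (z : ℝ)| + (k : ℝ) + (z : ℝ)) with hc1
  apply Summable.of_nonneg_of_le
    (fun κ => mul_nonneg (mul_nonneg (NB_nonneg hr hp hp1.le z) (NB_nonneg hr' hp hp1.le κ))
      (hV0 _ _))
    (fun κ => ?_) (((summable_NB_linear hr' hp hp1 c1 C).mul_left (NB r p z)))
  have hb : V (b - (z : ℤ)) (k + z + κ) ≤ c1 + C * (κ : ℝ) := by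
    have := hVb (b - (z : ℤ)) (k + z + κ)
    rw [hc1]
    push_cast at this ⊢
    linarith
  calc NB r p z * NB r' p κ * V (b - (z : ℤ)) (k + z + κ)
      ≤ NB r p z * NB r' p κ * (c1 + C * (κ : ℝ)) := by
        apply mul_le_mul_of_nonneg_left hb
        exact mul_nonneg (NB_nonneg hr hp hp1.le z) (NB_nonneg hr' hp hp1.le κ)
    _ = NB r p z * (NB r' p κ * (c1 + C * (κ : ℝ))) := by ring

lemma I_nonneg (b : ℤ) (z : ℕ) : 0 ≤ Ifun p r r' V k b z :=
  tsum_nonneg fun κ => mul_nonneg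
    (mul_nonneg (NB_nonneg hr hp hp1.le z) (NB_nonneg hr' hp hp1.le κ)) (hV0 _ _)

lemma I_le (b : ℤ) (z : ℕ) :
    Ifun p r r' V k b z ≤ NB r p z *
      ((C * (1 + |(b : ℝ)| + (k : ℝ)) * (∑' κ : ℕ, NB r' p κ)
          + C * (∑' κ : ℕ, NB r' p κ * (κ : ℝ)))
        + (2 * C * (∑' κ : ℕ, NB r' p κ)) * (z : ℝ)) := by
  set c1 : ℝ := C * (1 + |(b : ℝ) - (z : ℝ)| + (k : ℝ) + (z : ℝ)) with hc1
  have hSig : 0 ≤ ∑' κ : ℕ, NB r' p κ := tsum_nonneg fun κ => NB_nonneg hr' hp hp1.le κ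
  have hMom : 0 ≤ ∑' κ : ℕ, NB r' p κ * (κ : ℝ) :=
    tsum_nonneg fun κ => mul_nonneg (NB_nonneg hr' hp hp1.le κ) (Nat.cast_nonneg κ)
  have step1 : Ifun p r r' V k b z ≤
      ∑' κ : ℕ, NB r p z * (NB r' p κ * (c1 + C * (κ : ℝ))) := by
    apply tsum_le_of_nonneg_of_le
      (fun κ => mul_nonneg (mul_nonneg (NB_nonneg hr hp hp1.le z) (NB_nonneg hr' hp hp1.le κ))
        (hV0 _ _))
      (fun κ => ?_) (((summable_NB_linear hr' hp hp1 c1 C).mul_left (NB r p z)))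
    have hb : V (b - (z : ℤ)) (k + z + κ) ≤ c1 + C * (κ : ℝ) := by
      have := hVb (b - (z : ℤ)) (k + z + κ)
      rw [hc1]
      push_cast at this ⊢
      linarith
    calc NB r p z * NB r' p κ * V (b - (z : ℤ)) (k + z + κ)
        ≤ NB r p z * NB r' p κ * (c1 + C * (κ : ℝ)) := by
          apply mul_le_mul_of_nonneg_left hb
          exact mul_nonneg (NB_nonneg hr hp hp1.le z) (NB_nonneg hr' hp hp1.le κ)
      _ = NB r p z * (NB r' p κ * (c1 + C * (κ : ℝ))) := by ring
  have step2 : (∑' κ : ℕ, NB r p z * (NB r' p κ * (c1 + C * (κ : ℝ))))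
      = NB r p z * ((∑' κ : ℕ, NB r' p κ) * c1 + (∑' κ : ℕ, NB r' p κ * (κ : ℝ)) * C) := by
    rw [tsum_mul_left, tsum_NB_linear_eq hr' hp hp1 c1 C]
  have step3 : (∑' κ : ℕ, NB r' p κ) * c1 + (∑' κ : ℕ, NB r' p κ * (κ : ℝ)) * C ≤
      (C * (1 + |(b : ℝ)| + (k : ℝ)) * (∑' κ : ℕ, NB r' p κ)
          + C * (∑' κ : ℕ, NB r' p κ * (κ : ℝ)))
        + (2 * C * (∑' κ : ℕ, NB r' p κ)) * (z : ℝ) := by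
    have habs : |(b : ℝ) - (z : ℝ)| ≤ |(b : ℝ)| + (z : ℝ) := by
      have h1 : |(b : ℝ) - (z : ℝ)| ≤ |(b : ℝ)| + |(z : ℝ)| := abs_sub _ _
      simp only [Nat.abs_cast] at h1
      exact h1
    have hc1le : c1 ≤ C * (1 + |(b : ℝ)| + (k : ℝ)) + 2 * C * (z : ℝ) := by
      rw [hc1]; nlinarith [Nat.cast_nonneg (α := ℝ) z]
    nlinarith [mul_le_mul_of_nonneg_left hc1le hSig]
  calc Ifun p r r' V k b z ≤ _ := step1
    _ = _ := step2
    _ ≤ _ := by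
      apply mul_le_mul_of_nonneg_left step3 (NB_nonneg hr hp hp1.le z)

lemma outer_summable (b : ℤ) : Summable (fun z : ℕ => Ifun p r r' V k b z) := by
  apply Summable.of_nonneg_of_le (fun z => I_nonneg hr hr' hp hp1 hV0 hC hVb b z)
    (fun z => I_le hr hr' hp hp1 hV0 hC hVb b z)
    (summable_NB_linear hr hp hp1 _ _)

lemma J_nonneg (b : ℤ) : 0 ≤ Jfun p r r' V k b :=
  tsum_nonneg fun z => I_nonneg hr hr' hp hp1 hV0 hC hVb b z

lemma J_le (b : ℤ) :
    Jfun p r r' V k b ≤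
      (∑' z : ℕ, NB r p z) *
        (C * (1 + |(b : ℝ)| + (k : ℝ)) * (∑' κ : ℕ, NB r' p κ)
          + C * (∑' κ : ℕ, NB r' p κ * (κ : ℝ)))
      + (∑' z : ℕ, NB r p z * (z : ℝ)) * (2 * C * (∑' κ : ℕ, NB r' p κ)) := by
  calc Jfun p r r' V k b ≤ ∑' z : ℕ, NB r p z *
      ((C * (1 + |(b : ℝ)| + (k : ℝ)) * (∑' κ : ℕ, NB r' p κ)
          + C * (∑' κ : ℕ, NB r' p κ * (κ : ℝ)))
        + (2 * C * (∑' κ : ℕ, NB r' p κ)) * (z : ℝ)) := by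
        apply tsum_le_of_nonneg_of_le (fun z => I_nonneg hr hr' hp hp1 hV0 hC hVb b z)
          (fun z => I_le hr hr' hp hp1 hV0 hC hVb b z)
          (summable_NB_linear hr hp hp1 _ _)
    _ = _ := tsum_NB_linear_eq hr hp hp1 _ _

lemma J_convex (hVcx : ∀ x m, 2 * V x m ≤ V (x + 1) m + V (x - 1) m) (a : ℤ) :
    2 * Jfun p r r' V k a ≤ Jfun p r r' V k (a + 1) + Jfun p r r' V k (a - 1) := by
  apply tsum_convex (outer_summable hr hr' hp hp1 hV0 hC hVb a)
    (outer_summable hr hr' hp hp1 hV0 hC hVb (a + 1))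
    (outer_summable hr hr' hp hp1 hV0 hC hVb (a - 1))
  intro z
  apply tsum_convex (inner_summable hr hr' hp hp1 hV0 hC hVb a z)
    (inner_summable hr hr' hp hp1 hV0 hC hVb (a + 1) z)
    (inner_summable hr hr' hp hp1 hV0 hC hVb (a - 1) z)
  intro κ
  have key := hVcx (a - (z : ℤ)) (k + z + κ)
  have hP : 0 ≤ NB r p z * NB r' p κ :=
    mul_nonneg (NB_nonneg hr hp hp1.le z) (NB_nonneg hr' hp hp1.le κ)
  have e1 : a + 1 - (z : ℤ) = (a - (z : ℤ)) + 1 := by ring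
  have e2 : a - 1 - (z : ℤ) = (a - (z : ℤ)) - 1 := by ring
  rw [e1, e2]
  nlinarith [mul_le_mul_of_nonneg_left key hP]

end J

lemma iInf_ray_convex (g : ℤ → ℝ)
    (hbdd : ∀ x : ℤ, BddBelow (Set.range fun a : {a : ℤ // x ≤ a} => g a.1))
    (hgcv : ∀ a : ℤ, 2 * g a ≤ g (a + 1) + g (a - 1)) (x : ℤ) :
    2 * (⨅ a : {a : ℤ // x ≤ a}, g a.1) ≤
      (⨅ a : {a : ℤ // x + 1 ≤ a}, g a.1) + (⨅ a : {a : ℤ // x - 1 ≤ a}, g a.1) := by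
  haveI hne : ∀ y : ℤ, Nonempty {a : ℤ // y ≤ a} := fun y => ⟨⟨y, le_rfl⟩⟩
  have hH_le : ∀ y b : ℤ, y ≤ b → (⨅ a : {a : ℤ // y ≤ a}, g a.1) ≤ g b :=
    fun y b h => ciInf_le (hbdd y) ⟨b, h⟩
  by_cases hc : (⨅ a : {a : ℤ // x ≤ a}, g a.1) ≤ g (x - 1)
  · have hup : (⨅ a : {a : ℤ // x ≤ a}, g a.1) ≤ ⨅ a : {a : ℤ // x + 1 ≤ a}, g a.1 :=
      le_ciInf fun b => hH_le x b.1 (by have := b.2; omega)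
    have hdown : (⨅ a : {a : ℤ // x ≤ a}, g a.1) ≤ ⨅ a : {a : ℤ // x - 1 ≤ a}, g a.1 := by
      apply le_ciInf
      intro b
      rcases lt_or_ge b.1 x with h | h
      · have hb : b.1 = x - 1 := by have := b.2; omega
        rw [hb]; exact hc
      · exact hH_le x b.1 h
    linarith
  · push_neg at hc
    have hGx : g (x - 1) < g x := lt_of_lt_of_le hc (hH_le x x le_rfl)
    have hD : ∀ n : ℕ, g x - g (x - 1) ≤ g (x - 1 + (n : ℤ) + 1) - g (x - 1 + (n : ℤ)) := by
      intro n
      induction n with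
      | zero => norm_num
      | succ n ih =>
        have h2 := hgcv (x - 1 + (n : ℤ) + 1)
        have e2 : (x - 1 + (n : ℤ) + 1) - 1 = x - 1 + (n : ℤ) := by ring
        have e3 : x - 1 + ((n + 1 : ℕ) : ℤ) = x - 1 + (n : ℤ) + 1 := by push_cast; ring
        rw [e2] at h2
        rw [e3]
        linarith
    have hstep : ∀ b : ℤ, x - 1 ≤ b → g b ≤ g (b + 1) := by
      intro b hb
      have hn : b = x - 1 + ((b - (x - 1)).toNat : ℤ) := by omega
      have hd := hD (b - (x - 1)).toNat
      rw [← hn] at hd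
      linarith
    have hmono : ∀ a : ℤ, x - 1 ≤ a → ∀ b : ℤ, a ≤ b → g a ≤ g b := by
      intro a ha
      exact Int.le_induction le_rfl (fun b hab ih => ih.trans (hstep b (by omega)))
    have k1 : (⨅ a : {a : ℤ // x ≤ a}, g a.1) ≤ g x := hH_le x x le_rfl
    have k2 : g (x + 1) ≤ ⨅ a : {a : ℤ // x + 1 ≤ a}, g a.1 :=
      le_ciInf fun b => hmono (x + 1) (by omega) b.1 b.2
    have k3 : g (x - 1) ≤ ⨅ a : {a : ℤ // x - 1 ≤ a}, g a.1 :=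
      le_ciInf fun b => hmono (x - 1) (by omega) b.1 b.2
    have := hgcv x
    linarith

noncomputable def T1 (r p : ℝ) (b : ℤ) : ℝ := ∑' z : ℕ, NB r p z * max ((b : ℝ) - (z : ℝ)) 0
noncomputable def T2 (r p : ℝ) (b : ℤ) : ℝ := ∑' z : ℕ, NB r p z * max ((z : ℝ) - (b : ℝ)) 0

lemma pt_pos {β0 : ℝ} (hβ0 : 0 < β0) (N t : ℕ) : 0 < pt β0 N t := by
  unfold pt
  have h1 : 0 < β0 + (N : ℝ) * (t : ℝ) := by positivity
  positivity

lemma pt_lt_one {β0 : ℝ} (hβ0 : 0 < β0) (N t : ℕ) : pt β0 N t < 1 := by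
  unfold pt
  have h1 : 0 < β0 + (N : ℝ) * (t : ℝ) := by positivity
  rw [div_lt_one (by positivity)]
  linarith

lemma T1_summable {r p : ℝ} (hr : 0 ≤ r) (hp : 0 < p) (hp1 : p < 1) (b : ℤ) :
    Summable (fun z : ℕ => NB r p z * max ((b : ℝ) - (z : ℝ)) 0) := by
  apply Summable.of_nonneg_of_le
    (fun z => mul_nonneg (NB_nonneg hr hp hp1.le z) (le_max_right _ _))
    (fun z => ?_) (summable_NB_linear hr hp hp1 |(b : ℝ)| 0)
  have h1 : max ((b : ℝ) - (z : ℝ)) 0 ≤ |(b : ℝ)| + 0 * (z : ℝ) := by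
    apply max_le
    · have := le_abs_self (b : ℝ)
      have := Nat.cast_nonneg (α := ℝ) z
      linarith
    · positivity
  exact mul_le_mul_of_nonneg_left h1 (NB_nonneg hr hp hp1.le z)

lemma T2_summable {r p : ℝ} (hr : 0 ≤ r) (hp : 0 < p) (hp1 : p < 1) (b : ℤ) :
    Summable (fun z : ℕ => NB r p z * max ((z : ℝ) - (b : ℝ)) 0) := by
  apply Summable.of_nonneg_of_le
    (fun z => mul_nonneg (NB_nonneg hr hp hp1.le z) (le_max_right _ _))
    (fun z => ?_) (summable_NB_linear hr hp hp1 |(b : ℝ)| 1)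
  have h1 : max ((z : ℝ) - (b : ℝ)) 0 ≤ |(b : ℝ)| + 1 * (z : ℝ) := by
    apply max_le
    · have := neg_abs_le (b : ℝ)
      linarith
    · have := Nat.cast_nonneg (α := ℝ) z
      have := abs_nonneg (b : ℝ)
      linarith
  exact mul_le_mul_of_nonneg_left h1 (NB_nonneg hr hp hp1.le z)

lemma G_eq (α0 β0 : ℝ) (N : ℕ) (cv ch cb : ℝ) (W : ℕ → ℤ → ℕ → ℝ) (t : ℕ) (b : ℤ) (k : ℕ) :
    G α0 β0 N cv ch cb W t b k =
      cv * (b : ℝ) + ch * T1 (α0 + (k : ℝ)) (pt β0 N t) b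
        + cb * T2 (α0 + (k : ℝ)) (pt β0 N t) b
        + Jfun (pt β0 N t) (α0 + (k : ℝ)) (((N : ℝ) - 1) * (α0 + (k : ℝ))) (W (t + 1)) k b := rfl

lemma Gconv_step (α0 β0 : ℝ) (hα0 : 0 < α0) (hβ0 : 0 < β0) (N : ℕ) (hN : 1 ≤ N)
    (cv ch cb : ℝ) (hch : 0 ≤ ch) (hcb : 0 ≤ cb)
    (W : ℕ → ℤ → ℕ → ℝ) (t : ℕ) (C : ℝ) (hC : 0 ≤ C)
    (hW0 : ∀ x m, 0 ≤ W (t + 1) x m)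
    (hWb : ∀ x m, W (t + 1) x m ≤ C * (1 + |(x : ℝ)| + (m : ℝ)))
    (hWcx : ∀ x m, 2 * W (t + 1) x m ≤ W (t + 1) (x + 1) m + W (t + 1) (x - 1) m) :
    ∀ (k : ℕ) (a : ℤ), 2 * G α0 β0 N cv ch cb W t a k ≤
      G α0 β0 N cv ch cb W t (a + 1) k + G α0 β0 N cv ch cb W t (a - 1) k := by
  intro k a
  have hp : 0 < pt β0 N t := pt_pos hβ0 N t
  have hp1 : pt β0 N t < 1 := pt_lt_one hβ0 N t
  set p := pt β0 N t
  have hr : (0 : ℝ) < α0 + (k : ℝ) := by positivity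
  have hr' : (0 : ℝ) ≤ ((N : ℝ) - 1) * (α0 + (k : ℝ)) := by
    apply mul_nonneg _ hr.le
    have : (1 : ℝ) ≤ (N : ℝ) := by exact_mod_cast hN
    linarith
  set r := α0 + (k : ℝ)
  set r' := ((N : ℝ) - 1) * (α0 + (k : ℝ))
  rw [G_eq, G_eq, G_eq]
  have hlin : 2 * (cv * ((a : ℤ) : ℝ)) = cv * (((a + 1 : ℤ)) : ℝ) + cv * (((a - 1 : ℤ)) : ℝ) := by
    push_cast; ring
  have h1 : 2 * T1 r p a ≤ T1 r p (a + 1) + T1 r p (a - 1) := by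
    apply tsum_convex (T1_summable hr.le hp hp1 a) (T1_summable hr.le hp hp1 (a + 1))
      (T1_summable hr.le hp hp1 (a - 1))
    intro z
    have hm := max_conv ((a : ℝ) - (z : ℝ))
    have hn := NB_nonneg (r := r) (p := p) hr.le hp hp1.le z
    have e1 : ((a + 1 : ℤ) : ℝ) - (z : ℝ) = ((a : ℝ) - (z : ℝ)) + 1 := by push_cast; ring
    have e2 : ((a - 1 : ℤ) : ℝ) - (z : ℝ) = ((a : ℝ) - (z : ℝ)) - 1 := by push_cast; ring
    rw [e1, e2]
    nlinarith [mul_le_mul_of_nonneg_left hm hn]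
  have h2 : 2 * T2 r p a ≤ T2 r p (a + 1) + T2 r p (a - 1) := by
    apply tsum_convex (T2_summable hr.le hp hp1 a) (T2_summable hr.le hp hp1 (a + 1))
      (T2_summable hr.le hp hp1 (a - 1))
    intro z
    have hm := max_conv ((z : ℝ) - (a : ℝ))
    have hn := NB_nonneg (r := r) (p := p) hr.le hp hp1.le z
    have e1 : (z : ℝ) - ((a + 1 : ℤ) : ℝ) = ((z : ℝ) - (a : ℝ)) - 1 := by push_cast; ring
    have e2 : (z : ℝ) - ((a - 1 : ℤ) : ℝ) = ((z : ℝ) - (a : ℝ)) + 1 := by push_cast; ring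
    rw [e1, e2]
    nlinarith [mul_le_mul_of_nonneg_left hm hn]
  have h3 : 2 * Jfun p r r' (W (t + 1)) k a ≤
      Jfun p r r' (W (t + 1)) k (a + 1) + Jfun p r r' (W (t + 1)) k (a - 1) :=
    J_convex hr.le hr' hp hp1 hW0 hC hWb hWcx a
  have hch1 : ch * (2 * T1 r p a) ≤ ch * (T1 r p (a + 1) + T1 r p (a - 1)) :=
    mul_le_mul_of_nonneg_left h1 hch
  have hcb1 : cb * (2 * T2 r p a) ≤ cb * (T2 r p (a + 1) + T2 r p (a - 1)) :=
    mul_le_mul_of_nonneg_left h2 hcb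
  nlinarith [hch1, hcb1, h3, hlin]

set_option maxHeartbeats 2000000 in
lemma Wstep (α0 β0 : ℝ) (hα0 : 0 < α0) (hβ0 : 0 < β0) (N : ℕ) (hN : 1 ≤ N)
    (cv ch cb : ℝ) (hcv : 0 ≤ cv) (hch : 0 ≤ ch) (hcb : 0 ≤ cb)
    (W : ℕ → ℤ → ℕ → ℝ) (t : ℕ)
    (hWrec : ∀ x k, W t x k =
      (⨅ a : {a : ℤ // x ≤ a}, G α0 β0 N cv ch cb W t a.1 k) - cv * (x : ℝ))
    (C : ℝ) (hC : 0 ≤ C)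
    (hW0 : ∀ x m, 0 ≤ W (t + 1) x m)
    (hWb : ∀ x m, W (t + 1) x m ≤ C * (1 + |(x : ℝ)| + (m : ℝ)))
    (hWcx : ∀ x m, 2 * W (t + 1) x m ≤ W (t + 1) (x + 1) m + W (t + 1) (x - 1) m) :
    (∀ x m, 0 ≤ W t x m) ∧
    (∃ C', 0 ≤ C' ∧ ∀ x m, W t x m ≤ C' * (1 + |(x : ℝ)| + (m : ℝ))) ∧
    (∀ x m, 2 * W t x m ≤ W t (x + 1) m + W t (x - 1) m) := by
  haveI hne : ∀ x : ℤ, Nonempty {a : ℤ // x ≤ a} := fun x => ⟨⟨x, le_rfl⟩⟩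
  have hp : 0 < pt β0 N t := pt_pos hβ0 N t
  have hp1 : pt β0 N t < 1 := pt_lt_one hβ0 N t
  set p := pt β0 N t with hpdef
  have h1p : (0:ℝ) ≤ 1 - p := by linarith
  have hNR : (1:ℝ) ≤ (N : ℝ) := by exact_mod_cast hN
  have hrk : ∀ m : ℕ, (0:ℝ) < α0 + (m : ℝ) := fun m => by positivity
  have hr'k : ∀ m : ℕ, (0:ℝ) ≤ ((N : ℝ) - 1) * (α0 + (m : ℝ)) :=
    fun m => mul_nonneg (by linarith) (hrk m).le
  have hGcv := Gconv_step α0 β0 hα0 hβ0 N hN cv ch cb hch hcb W t C hC hW0 hWb hWcx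
  have hT1nn : ∀ (m : ℕ) (b : ℤ), 0 ≤ T1 (α0 + (m : ℝ)) p b := fun m b =>
    tsum_nonneg fun z => mul_nonneg (NB_nonneg (hrk m).le hp hp1.le z) (le_max_right _ _)
  have hT2nn : ∀ (m : ℕ) (b : ℤ), 0 ≤ T2 (α0 + (m : ℝ)) p b := fun m b =>
    tsum_nonneg fun z => mul_nonneg (NB_nonneg (hrk m).le hp hp1.le z) (le_max_right _ _)
  have hJnn : ∀ (m : ℕ) (b : ℤ),
      0 ≤ Jfun p (α0 + (m : ℝ)) (((N : ℝ) - 1) * (α0 + (m : ℝ))) (W (t + 1)) m b :=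
    fun m b => J_nonneg (hrk m).le (hr'k m) hp hp1 hW0 hC hWb b
  have hGge : ∀ (m : ℕ) (b : ℤ), cv * (b : ℝ) ≤ G α0 β0 N cv ch cb W t b m := by
    intro m b
    rw [G_eq]
    rw [← hpdef]
    have := mul_nonneg hch (hT1nn m b)
    have := mul_nonneg hcb (hT2nn m b)
    have := hJnn m b
    linarith
  have hbdd : ∀ (m : ℕ) (x : ℤ),
      BddBelow (Set.range fun a : {a : ℤ // x ≤ a} => G α0 β0 N cv ch cb W t a.1 m) := by
    intro m x
    refine ⟨cv * (x : ℝ), ?_⟩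
    rintro y ⟨a, rfl⟩
    exact le_trans (mul_le_mul_of_nonneg_left (by exact_mod_cast a.2) hcv) (hGge m a.1)
  have hH_le : ∀ (m : ℕ) (x b : ℤ), x ≤ b →
      (⨅ a : {a : ℤ // x ≤ a}, G α0 β0 N cv ch cb W t a.1 m) ≤ G α0 β0 N cv ch cb W t b m :=
    fun m x b h => ciInf_le (hbdd m x) ⟨b, h⟩
  have hH_ge : ∀ (m : ℕ) (x : ℤ),
      cv * (x : ℝ) ≤ (⨅ a : {a : ℤ // x ≤ a}, G α0 β0 N cv ch cb W t a.1 m) :=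
    fun m x => le_ciInf fun b =>
      le_trans (mul_le_mul_of_nonneg_left (by exact_mod_cast b.2) hcv) (hGge m b.1)
  refine ⟨?_, ?_, ?_⟩
  · -- nonnegativity
    intro x m
    rw [hWrec x m]
    have := hH_ge m x
    linarith
  · -- linear upper bound
    set Sg : ℝ := ∑' z : ℕ, NB α0 p z with hSgdef
    set Sg' : ℝ := ∑' z : ℕ, NB (((N : ℝ) - 1) * α0) p z with hSg'def
    have hSg : 0 ≤ Sg := tsum_nonneg fun z => NB_nonneg hα0.le hp hp1.le z
    have hSg' : 0 ≤ Sg' :=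
      tsum_nonneg fun z => NB_nonneg (mul_nonneg (by linarith) hα0.le) hp hp1.le z
    set Kq : ℝ := ((1 - p) * (α0 + 1) * Sg) / p with hKqdef
    set Kq' : ℝ := ((1 - p) * ((N : ℝ) - 1) * (α0 + 1) * Sg') / p with hKq'def
    have hKq : 0 ≤ Kq := by
      rw [hKqdef]; apply div_nonneg _ hp.le; apply mul_nonneg (mul_nonneg h1p (by linarith)) hSg
    have hKq' : 0 ≤ Kq' := by
      rw [hKq'def]; apply div_nonneg _ hp.le
      apply mul_nonneg (mul_nonneg (mul_nonneg h1p (by linarith)) (by linarith)) hSg'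
    have hSigk : ∀ m : ℕ, (∑' z : ℕ, NB (α0 + (m : ℝ)) p z) = Sg :=
      fun m => NB_shift_nat hα0 hp hp1 m
    have hSig'k : ∀ m : ℕ, (∑' κ : ℕ, NB (((N : ℝ) - 1) * (α0 + (m : ℝ))) p κ) = Sg' := by
      intro m
      rcases eq_or_lt_of_le hN with h1 | h2
      · have hN1 : (N : ℝ) = 1 := by exact_mod_cast h1.symm
        rw [hSg'def, hN1]
        norm_num
      · have hNge : (2:ℝ) ≤ (N : ℝ) := by exact_mod_cast h2
        have hbase : (0:ℝ) < ((N : ℝ) - 1) * α0 := by nlinarith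
        have ecast : (((N - 1) * m : ℕ) : ℝ) = ((N : ℝ) - 1) * (m : ℝ) := by
          push_cast [Nat.cast_sub hN]
          ring
        have e : ((N : ℝ) - 1) * (α0 + (m : ℝ)) = ((N : ℝ) - 1) * α0 + (((N - 1) * m : ℕ) : ℝ) := by
          rw [ecast]; ring
        rw [e, NB_shift_nat hbase hp hp1 ((N - 1) * m), hSg'def]
    have hkey : ∀ m : ℕ, α0 + (m : ℝ) ≤ (α0 + 1) * (1 + (m : ℝ)) := by
      intro m
      have := Nat.cast_nonneg (α := ℝ) m
      nlinarith
    have hM_le : ∀ m : ℕ, (∑' z : ℕ, NB (α0 + (m : ℝ)) p z * (z : ℝ)) ≤ Kq * (1 + (m : ℝ)) := by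
      intro m
      have h := NB_moment (hrk m).le hp hp1 (p := p)
      rw [hSigk m] at h
      have hMeq : (∑' z : ℕ, NB (α0 + (m : ℝ)) p z * (z : ℝ))
          = ((α0 + (m : ℝ)) * (1 - p) * Sg) / p := (eq_div_iff (ne_of_gt hp)).mpr h
      have hnum : (α0 + (m : ℝ)) * (1 - p) * Sg ≤ ((1 - p) * (α0 + 1) * Sg) * (1 + (m : ℝ)) := by
        nlinarith [mul_le_mul_of_nonneg_right (hkey m) (mul_nonneg h1p hSg)]
      rw [hMeq, hKqdef, div_mul_eq_mul_div]
      exact (div_le_div_iff_of_pos_right hp).mpr hnum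
    have hM'_le : ∀ m : ℕ,
        (∑' κ : ℕ, NB (((N : ℝ) - 1) * (α0 + (m : ℝ))) p κ * (κ : ℝ)) ≤ Kq' * (1 + (m : ℝ)) := by
      intro m
      have h := NB_moment (hr'k m) hp hp1 (p := p)
      rw [hSig'k m] at h
      have hMeq : (∑' κ : ℕ, NB (((N : ℝ) - 1) * (α0 + (m : ℝ))) p κ * (κ : ℝ))
          = ((((N : ℝ) - 1) * (α0 + (m : ℝ))) * (1 - p) * Sg') / p :=
        (eq_div_iff (ne_of_gt hp)).mpr h
      have hnum : (((N : ℝ) - 1) * (α0 + (m : ℝ))) * (1 - p) * Sg' ≤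
          ((1 - p) * ((N : ℝ) - 1) * (α0 + 1) * Sg') * (1 + (m : ℝ)) := by
        nlinarith [mul_le_mul_of_nonneg_right (hkey m)
          (mul_nonneg (mul_nonneg (by linarith : (0:ℝ) ≤ (N : ℝ) - 1) h1p) hSg')]
      rw [hMeq, hKq'def, div_mul_eq_mul_div]
      exact (div_le_div_iff_of_pos_right hp).mpr hnum
    refine ⟨ch * Sg + cb * Sg + cb * Kq + Sg * C * Sg' + Sg * C * Kq' + 2 * C * Sg' * Kq,
      by positivity, ?_⟩
    intro x m
    have hxnn : (0:ℝ) ≤ |(x : ℝ)| := abs_nonneg _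
    have hmnn : (0:ℝ) ≤ (m : ℝ) := Nat.cast_nonneg m
    have hxu : |(x : ℝ)| ≤ 1 + |(x : ℝ)| + (m : ℝ) := by linarith
    have h1mu : 1 + (m : ℝ) ≤ 1 + |(x : ℝ)| + (m : ℝ) := by linarith
    have hWle : W t x m ≤ ch * T1 (α0 + (m : ℝ)) p x + cb * T2 (α0 + (m : ℝ)) p x
        + Jfun p (α0 + (m : ℝ)) (((N : ℝ) - 1) * (α0 + (m : ℝ))) (W (t + 1)) m x := by
      rw [hWrec x m]
      have h2 := hH_le m x x le_rfl
      rw [G_eq, ← hpdef] at h2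
      linarith
    have hT1b : T1 (α0 + (m : ℝ)) p x ≤ Sg * |(x : ℝ)| := by
      have hstep : T1 (α0 + (m : ℝ)) p x ≤
          ∑' z : ℕ, NB (α0 + (m : ℝ)) p z * (|(x : ℝ)| + 0 * (z : ℝ)) := by
        apply tsum_le_of_nonneg_of_le
          (fun z => mul_nonneg (NB_nonneg (hrk m).le hp hp1.le z) (le_max_right _ _))
          (fun z => ?_) (summable_NB_linear (hrk m).le hp hp1 _ _)
        apply mul_le_mul_of_nonneg_left _ (NB_nonneg (hrk m).le hp hp1.le z)
        apply max_le
        · have h1 := le_abs_self (x : ℝ)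
          have h2 := Nat.cast_nonneg (α := ℝ) z
          linarith
        · positivity
      rw [tsum_NB_linear_eq (hrk m).le hp hp1, hSigk m] at hstep
      linarith
    have hT2b : T2 (α0 + (m : ℝ)) p x ≤ Sg * |(x : ℝ)| + Kq * (1 + (m : ℝ)) := by
      have hstep : T2 (α0 + (m : ℝ)) p x ≤
          ∑' z : ℕ, NB (α0 + (m : ℝ)) p z * (|(x : ℝ)| + 1 * (z : ℝ)) := by
        apply tsum_le_of_nonneg_of_le
          (fun z => mul_nonneg (NB_nonneg (hrk m).le hp hp1.le z) (le_max_right _ _))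
          (fun z => ?_) (summable_NB_linear (hrk m).le hp hp1 _ _)
        apply mul_le_mul_of_nonneg_left _ (NB_nonneg (hrk m).le hp hp1.le z)
        apply max_le
        · have h1 := neg_abs_le (x : ℝ)
          linarith
        · have h2 := Nat.cast_nonneg (α := ℝ) z
          linarith
      rw [tsum_NB_linear_eq (hrk m).le hp hp1, hSigk m] at hstep
      have := hM_le m
      linarith
    have hMu : (∑' z : ℕ, NB (α0 + (m : ℝ)) p z * (z : ℝ)) ≤
        Kq * (1 + |(x : ℝ)| + (m : ℝ)) :=
      (hM_le m).trans (mul_le_mul_of_nonneg_left h1mu hKq)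
    have hM'u : (∑' κ : ℕ, NB (((N : ℝ) - 1) * (α0 + (m : ℝ))) p κ * (κ : ℝ)) ≤
        Kq' * (1 + |(x : ℝ)| + (m : ℝ)) :=
      (hM'_le m).trans (mul_le_mul_of_nonneg_left h1mu hKq')
    have h0 := J_le (hrk m).le (hr'k m) hp hp1 hW0 hC hWb (k := m) x
    rw [hSigk m, hSig'k m] at h0
    have A1 : ch * T1 (α0 + (m : ℝ)) p x ≤ (ch * Sg) * (1 + |(x : ℝ)| + (m : ℝ)) := by
      nlinarith [mul_le_mul_of_nonneg_left hT1b hch,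
        mul_le_mul_of_nonneg_left hxu (mul_nonneg hch hSg)]
    have A2 : cb * T2 (α0 + (m : ℝ)) p x ≤
        (cb * Sg + cb * Kq) * (1 + |(x : ℝ)| + (m : ℝ)) := by
      nlinarith [mul_le_mul_of_nonneg_left hT2b hcb,
        mul_le_mul_of_nonneg_left hxu (mul_nonneg hcb hSg),
        mul_le_mul_of_nonneg_left h1mu (mul_nonneg hcb hKq)]
    have A3 : Jfun p (α0 + (m : ℝ)) (((N : ℝ) - 1) * (α0 + (m : ℝ))) (W (t + 1)) m x ≤
        (Sg * C * Sg' + Sg * C * Kq' + 2 * C * Sg' * Kq) * (1 + |(x : ℝ)| + (m : ℝ)) := by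
      nlinarith [h0, mul_le_mul_of_nonneg_left hM'u (mul_nonneg hSg hC),
        mul_le_mul_of_nonneg_right hMu (by positivity : (0:ℝ) ≤ 2 * C * Sg')]
    linarith
  · -- convexity
    intro x m
    have key := iInf_ray_convex (fun b => G α0 β0 N cv ch cb W t b m) (hbdd m) (hGcv m) x
    rw [hWrec x m, hWrec (x + 1) m, hWrec (x - 1) m]
    push_cast
    linarith [key]

set_option maxHeartbeats 1000000 in
lemma Wgood_all (α0 β0 : ℝ) (hα0 : 0 < α0) (hβ0 : 0 < β0)
    (N T : ℕ) (hN : 1 ≤ N)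
    (cv ch cb : ℝ) (hcv : 0 ≤ cv) (hch : 0 ≤ ch) (hcb : 0 ≤ cb)
    (W : ℕ → ℤ → ℕ → ℝ)
    (hWT : ∀ x k, W T x k = 0)
    (hW : ∀ t, t < T → ∀ x k,
      W t x k = (⨅ a : {a : ℤ // x ≤ a}, G α0 β0 N cv ch cb W t a.1 k) - cv * (x : ℝ)) :
    ∀ d t, t + d = T →
      (∀ x m, 0 ≤ W t x m) ∧
      (∃ C', 0 ≤ C' ∧ ∀ x m, W t x m ≤ C' * (1 + |(x : ℝ)| + (m : ℝ))) ∧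
      (∀ x m, 2 * W t x m ≤ W t (x + 1) m + W t (x - 1) m) := by
  intro d
  induction d with
  | zero =>
    intro t htT
    have hteq : t = T := by omega
    subst hteq
    refine ⟨fun x m => by rw [hWT], ⟨0, le_rfl, fun x m => by rw [hWT]; positivity⟩,
      fun x m => by rw [hWT, hWT, hWT]; norm_num⟩
  | succ d ih =>
    intro t htT
    have ht : t < T := by omega
    obtain ⟨h0, ⟨C, hC, hCb⟩, hcx⟩ := ih (t + 1) (by omega)
    exact Wstep α0 β0 hα0 hβ0 N hN cv ch cb hcv hch hcb W t (hW t ht) C hC h0 hCb hcx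

/-- The function `a ↦ G_t(a,k)` is (discretely) convex on `ℤ`. -/
theorem G_convex
    (α0 β0 : ℝ) (hα0 : 0 < α0) (hβ0 : 0 < β0)
    (N T : ℕ) (hN : 1 ≤ N) (hT : 1 ≤ T)
    (cv ch cb : ℝ) (hcv : 0 ≤ cv) (hch : 0 < ch) (hcb : 0 < cb)
    (W : ℕ → ℤ → ℕ → ℝ)
    (hWT : ∀ x k, W T x k = 0)
    (hW : ∀ t, t < T → ∀ x k,
      W t x k = (⨅ a : {a : ℤ // x ≤ a}, G α0 β0 N cv ch cb W t a.1 k) - cv * (x : ℝ)) :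
    ∀ t, t < T → ∀ (k : ℕ) (a : ℤ),
      2 * G α0 β0 N cv ch cb W t a k ≤
        G α0 β0 N cv ch cb W t (a + 1) k + G α0 β0 N cv ch cb W t (a - 1) k := by
  intro t ht k a
  obtain ⟨h0, ⟨C, hC, hCb⟩, hcx⟩ := Wgood_all α0 β0 hα0 hβ0 N T hN cv ch cb hcv hch.le hcb.le
    W hWT hW (T - (t + 1)) (t + 1) (by omega)
  exact Gconv_step α0 β0 hα0 hβ0 N hN cv ch cb hch.le hcb.le W t C hC h0 hCb hcx k a
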